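/- For n = 2^k with k ∈ ℕ, the fully balanced tree T^fb_k is the unique rooted binary tree with n leaves minimizing Δ_CS = C - S, and its minimal value is Δ_CS(T^fb_k) = -2^k · k. -/
import Mathlib

/-- Rooted binary trees: a leaf, or an internal vertex with two child subtrees. -/
inductive BTree where
  | leaf : BTree
  | node : BTree → BTree → BTree
deriving DecidableEq

namespace BTree

/-- Number of leaves of a rooted binary tree. -/
def numLeaves : BTree → ℕ
  | leaf => 1
  | node l r => numLeaves l + numLeaves r

/-- Sackin index: sum over internal vertices `v` of `n_{v_a} + n_{v_b}`. -/
def sackin : BTree → ℕ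
  | leaf => 0
  | node l r => sackin l + sackin r + (numLeaves l + numLeaves r)

/-- Colless index: sum over internal vertices `v` of `|n_{v_a} - n_{v_b}|`. -/
def colless : BTree → ℕ
  | leaf => 0
  | node l r =>
      colless l + colless r +
        (max (numLeaves l) (numLeaves r) - min (numLeaves l) (numLeaves r))

/-- `N_a`: sum over internal vertices of the larger child-subtree leaf count. -/
def Na : BTree → ℕ
  | leaf => 0
  | node l r => Na l + Na r + max (numLeaves l) (numLeaves r)

/-- `N_b`: sum over internal vertices of the smaller child-subtree leaf count. -/
def Nb : BTree → ℕ
  | leaf => 0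
  | node l r => Nb l + Nb r + min (numLeaves l) (numLeaves r)

/-- `Δ_CS = C - S`, as an integer. -/
def deltaCS (T : BTree) : ℤ := (colless T : ℤ) - (sackin T : ℤ)

/-- Caterpillar trees: every internal vertex has at least one leaf child. -/
def isCaterpillar : BTree → Prop
  | leaf => True
  | node l r => (l = leaf ∧ isCaterpillar r) ∨ (r = leaf ∧ isCaterpillar l)

/-- The fully balanced tree of height `h`. -/
def fbTree : ℕ → BTree
  | 0 => leaf
  | h + 1 => node (fbTree h) (fbTree h)

end BTree

namespace BTreeAux

open BTree Real

lemma descKey (a b : ℕ) (hab : a ≤ b) (i : ℕ) :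
    a.descFactorial i * b ^ i ≤ b.descFactorial i * a ^ i := by
  induction i with
  | zero => simp
  | succ i ih =>
    rw [Nat.descFactorial_succ, Nat.descFactorial_succ, pow_succ, pow_succ]
    have h1 : (a - i) * b ≤ (b - i) * a := by
      rcases le_or_gt i a with h | h
      · calc (a - i) * b = a * b - i * b := by rw [Nat.sub_mul]
          _ ≤ b * a - i * a := by
              rw [mul_comm a b]
              exact Nat.sub_le_sub_left (Nat.mul_le_mul_left i hab) _
          _ = (b - i) * a := by rw [Nat.sub_mul]
      · simp [Nat.sub_eq_zero_of_le h.le]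
    calc (a - i) * a.descFactorial i * (b ^ i * b)
        = ((a - i) * b) * (a.descFactorial i * b ^ i) := by ring
      _ ≤ ((b - i) * a) * (b.descFactorial i * a ^ i) := Nat.mul_le_mul h1 ih
      _ = (b - i) * b.descFactorial i * (a ^ i * a) := by ring

lemma chooseKey (a b : ℕ) (hab : a ≤ b) (i : ℕ) :
    a.choose i * b ^ i ≤ b.choose i * a ^ i := by
  have h := descKey a b hab i
  rw [Nat.descFactorial_eq_factorial_mul_choose, Nat.descFactorial_eq_factorial_mul_choose] at h
  have : i.factorial * (a.choose i * b ^ i) ≤ i.factorial * (b.choose i * a ^ i) := by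
    calc i.factorial * (a.choose i * b ^ i) = i.factorial * a.choose i * b ^ i := by ring
      _ ≤ i.factorial * b.choose i * a ^ i := h
      _ = i.factorial * (b.choose i * a ^ i) := by ring
  exact Nat.le_of_mul_le_mul_left this i.factorial_pos

lemma natKey (a b : ℕ) (hab : a ≤ b) : 2 ^ a * b ^ b ≤ (a + b) ^ b := by
  rw [add_pow]
  calc 2 ^ a * b ^ b = (Finset.range (a + 1)).sum (a.choose) * b ^ b := by
        rw [Nat.sum_range_choose]
      _ = ∑ i ∈ Finset.range (a + 1), a.choose i * b ^ b := by rw [Finset.sum_mul]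
      _ ≤ ∑ i ∈ Finset.range (a + 1), a ^ i * b ^ (b - i) * b.choose i := by
        apply Finset.sum_le_sum
        intro i hi
        have hia : i ≤ a := Nat.lt_succ_iff.mp (Finset.mem_range.mp hi)
        have hib : i ≤ b := hia.trans hab
        calc a.choose i * b ^ b = (a.choose i * b ^ i) * b ^ (b - i) := by
              rw [mul_assoc, ← pow_add, Nat.add_sub_cancel' hib]
          _ ≤ (b.choose i * a ^ i) * b ^ (b - i) :=
              Nat.mul_le_mul_right _ (chooseKey a b hab i)
          _ = a ^ i * b ^ (b - i) * b.choose i := by ring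
      _ ≤ ∑ i ∈ Finset.range (b + 1), a ^ i * b ^ (b - i) * b.choose i := by
        apply Finset.sum_le_sum_of_subset
        exact Finset.range_subset_range.mpr (by omega)

lemma piece2 (a b : ℕ) (ha : 1 ≤ a) (hab : a ≤ b) :
    (a : ℝ) + b * logb 2 b ≤ b * logb 2 ((a : ℝ) + b) := by
  have hb : (0:ℝ) < b := by exact_mod_cast ha.trans hab
  have hcast : (2:ℝ) ^ a * (b:ℝ) ^ b ≤ ((a:ℝ) + b) ^ b := by
    exact_mod_cast natKey a b hab
  have hlog := Real.logb_le_logb_of_le (b := 2) (by norm_num) (by positivity) hcast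
  rw [Real.logb_mul (by positivity) (by positivity), Real.logb_pow, Real.logb_pow,
    Real.logb_pow, Real.logb_self_eq_one (by norm_num)] at hlog
  simpa using hlog

lemma key (a b : ℕ) (ha : 1 ≤ a) (hab : a ≤ b) :
    (a:ℝ) * logb 2 a + b * logb 2 b + 2 * a ≤ ((a:ℝ) + b) * logb 2 ((a:ℝ) + b) := by
  have hA : (1:ℝ) ≤ a := by exact_mod_cast ha
  have hA0 : (0:ℝ) < a := by linarith
  have h1 : (a:ℝ) * (1 + logb 2 a) ≤ a * logb 2 ((a:ℝ) + b) := by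
    have h2a : (2:ℝ) * a ≤ (a:ℝ) + b := by
      have : (a:ℝ) ≤ b := by exact_mod_cast hab
      linarith
    have := Real.logb_le_logb_of_le (b := 2) (by norm_num) (by positivity) h2a
    rw [Real.logb_mul (by norm_num) (by positivity),
      Real.logb_self_eq_one (by norm_num)] at this
    nlinarith
  have h2 := piece2 a b ha hab
  nlinarith [h1, h2]

lemma keyStrict (a b : ℕ) (ha : 1 ≤ a) (hab : a < b) :
    (a:ℝ) * logb 2 a + b * logb 2 b + 2 * a < ((a:ℝ) + b) * logb 2 ((a:ℝ) + b) := by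
  have hA : (1:ℝ) ≤ a := by exact_mod_cast ha
  have hA0 : (0:ℝ) < a := by linarith
  have h1 : (a:ℝ) * (1 + logb 2 a) < a * logb 2 ((a:ℝ) + b) := by
    have h2a : (2:ℝ) * a < (a:ℝ) + b := by
      have : (a:ℝ) < b := by exact_mod_cast hab
      linarith
    have := Real.logb_lt_logb (b := 2) (by norm_num) (by positivity) h2a
    rw [Real.logb_mul (by norm_num) (by positivity),
      Real.logb_self_eq_one (by norm_num)] at this
    nlinarith
  have h2 := piece2 a b ha hab.le
  nlinarith [h1, h2]

lemma numLeaves_pos : ∀ T : BTree, 1 ≤ numLeaves T := by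
  intro T
  induction T with
  | leaf => simp [numLeaves]
  | node l r ihl ihr => simp only [numLeaves]; omega

lemma sackin_eq (T : BTree) : sackin T = colless T + 2 * Nb T := by
  induction T with
  | leaf => simp [sackin, colless, Nb]
  | node l r ihl ihr =>
    simp only [sackin, colless, Nb]
    rcases le_total (numLeaves l) (numLeaves r) with h | h
    · rw [max_eq_right h, min_eq_left h]; omega
    · rw [max_eq_left h, min_eq_right h]; omega

lemma deltaCS_eq (T : BTree) : deltaCS T = -((2 * Nb T : ℕ) : ℤ) := by
  have h := sackin_eq T
  unfold deltaCS
  push_cast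
  omega

lemma numLeaves_fb (k : ℕ) : numLeaves (fbTree k) = 2 ^ k := by
  induction k with
  | zero => simp [fbTree, numLeaves]
  | succ k ih => simp only [fbTree, numLeaves, ih, pow_succ]; ring

lemma Nb_fb (k : ℕ) : 2 * Nb (fbTree k) = 2 ^ k * k := by
  induction k with
  | zero => simp [fbTree, Nb]
  | succ k ih =>
    simp only [fbTree, Nb, numLeaves_fb, min_self]
    have : 2 * (Nb (fbTree k) + Nb (fbTree k) + 2 ^ k) =
        2 * (2 * Nb (fbTree k)) + 2 * 2 ^ k := by ring
    rw [this, ih, pow_succ]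
    ring

lemma bound (T : BTree) :
    (2 * (Nb T : ℝ) ≤ (numLeaves T : ℝ) * logb 2 (numLeaves T)) ∧
      ∀ k : ℕ, numLeaves T = 2 ^ k → T ≠ fbTree k →
        2 * (Nb T : ℝ) < (numLeaves T : ℝ) * logb 2 (numLeaves T) := by
  induction T with
  | leaf =>
    constructor
    · simp [Nb, numLeaves]
    · intro k hk hne
      match k with
      | 0 => exact absurd rfl hne
      | k + 1 =>
        simp only [numLeaves] at hk
        rw [pow_succ] at hk
        have : 1 ≤ 2 ^ k := Nat.one_le_two_pow
        omega
  | node l r ihl ihr =>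
    obtain ⟨ihl1, ihl2⟩ := ihl
    obtain ⟨ihr1, ihr2⟩ := ihr
    have ha := numLeaves_pos l
    have hb := numLeaves_pos r
    obtain ⟨a, ha'⟩ : ∃ a, numLeaves l = a := ⟨_, rfl⟩
    obtain ⟨b, hb'⟩ : ∃ b, numLeaves r = b := ⟨_, rfl⟩
    rw [ha'] at ihl1 ihl2 ha
    rw [hb'] at ihr1 ihr2 hb
    have weak : 2 * (Nb (node l r) : ℝ) ≤
        (numLeaves (node l r) : ℝ) * logb 2 (numLeaves (node l r)) := by
      simp only [Nb, numLeaves, ha', hb']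
      have hsplit : (a:ℝ) * logb 2 a + b * logb 2 b + 2 * ((min a b : ℕ) : ℝ) ≤
          ((a:ℝ) + b) * logb 2 ((a:ℝ) + b) := by
        rcases le_total a b with h | h
        · rw [min_eq_left h]; exact key a b ha h
        · rw [min_eq_right h]
          have := key b a hb h
          rw [show (b:ℝ) + a = (a:ℝ) + b from by ring] at this
          linarith
      have h2 : ((Nb l + Nb r + min a b : ℕ) : ℝ) = (Nb l : ℝ) + Nb r + ((min a b : ℕ) : ℝ) := by
        push_cast; ring
      have h3 : ((a + b : ℕ) : ℝ) = (a : ℝ) + b := by push_cast; ring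
      rw [h2, h3]
      linarith
    refine ⟨weak, ?_⟩
    intro k hk hne
    simp only [numLeaves, ha', hb'] at hk
    match k with
    | 0 =>
      simp only [pow_zero] at hk
      omega
    | k + 1 =>
      simp only [Nb, numLeaves, ha', hb']
      have h3 : ((a + b : ℕ) : ℝ) = (a : ℝ) + b := by push_cast; ring
      rcases Nat.lt_trichotomy a b with h | h | h
      · have hs := keyStrict a b ha h
        rw [min_eq_left h.le, h3]
        push_cast
        linarith
      · subst h
        have ha2 : a = 2 ^ k := by
          have : (2:ℕ) ^ (k+1) = 2 * 2 ^ k := by rw [pow_succ]; ring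
          omega
        have hchild : l ≠ fbTree k ∨ r ≠ fbTree k := by
          by_contra hcon
          push_neg at hcon
          exact hne (by simp [fbTree, hcon.1, hcon.2])
        have heq : ((a:ℝ) + a) * logb 2 ((a:ℝ) + a) =
            (a:ℝ) * logb 2 a + a * logb 2 a + 2 * a := by
          have hA0 : (0:ℝ) < a := by exact_mod_cast ha
          have : logb 2 ((a:ℝ) + a) = 1 + logb 2 a := by
            rw [show (a:ℝ) + a = 2 * a from by ring,
              Real.logb_mul (by norm_num) (by positivity),
              Real.logb_self_eq_one (by norm_num)]
          rw [this]; ring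
        rw [min_self, h3, heq]
        rcases hchild with hc | hc
        · have s1 := ihl2 k ha2 hc
          push_cast
          linarith
        · have s2 := ihr2 k ha2 hc
          push_cast
          linarith
      · have hs := keyStrict b a hb h
        rw [show (b:ℝ) + a = (a:ℝ) + b from by ring] at hs
        rw [min_eq_right h.le, h3]
        push_cast
        linarith

end BTreeAux

open BTree in
/-- for `n = 2^k`, the fully balanced tree `T^fb_k` is the unique
minimizer of `Δ_CS`, and `Δ_CS(T^fb_k) = -2^k · k`. -/
theorem fbTree_unique_min_deltaCS (k : ℕ) :
    deltaCS (fbTree k) = -((2 : ℤ) ^ k * k) ∧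
      ∀ T : BTree, numLeaves T = 2 ^ k → T ≠ fbTree k →
        deltaCS (fbTree k) < deltaCS T := by
  constructor
  · rw [BTreeAux.deltaCS_eq, BTreeAux.Nb_fb]
    push_cast
    ring
  · intro T hT hne
    have hstrict := (BTreeAux.bound T).2 k hT hne
    have hrhs : (numLeaves T : ℝ) * Real.logb 2 (numLeaves T) = 2 ^ k * k := by
      rw [hT]
      push_cast
      rw [Real.logb_pow, Real.logb_self_eq_one (by norm_num)]
      ring
    have hfb : (2 * Nb (fbTree k) : ℕ) = 2 ^ k * k := BTreeAux.Nb_fb k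
    have hnat : 2 * Nb T < 2 * Nb (fbTree k) := by
      have : 2 * (Nb T : ℝ) < ((2 * Nb (fbTree k) : ℕ) : ℝ) := by
        rw [hfb]; push_cast; rw [hrhs] at hstrict; linarith
      exact_mod_cast this
    rw [BTreeAux.deltaCS_eq, BTreeAux.deltaCS_eq]
    have : ((2 * Nb T : ℕ) : ℤ) < ((2 * Nb (fbTree k) : ℕ) : ℤ) := by exact_mod_cast hnat
    omega
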